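/- Let v, v' be vertices of a simple graph G such that for every vertex x, v ∼_G x if and only if v' ∼_G x. Then for every sequence of pivots φ applicable to G and every vertex x, v ∼_{Gφ} x if and only if v' ∼_{Gφ} x. -/

import Mathlib

set_option linter.unusedSectionVars false

variable {V : Type*} [Fintype V] [DecidableEq V]

/-- Local complementation at a vertex `w`: complement the edges within `N_G(w)`. -/
def SimpleGraph.localComp (G : SimpleGraph V) (w : V) : SimpleGraph V where
  Adj x y := x ≠ y ∧ Xor' (G.Adj x y) (G.Adj x w ∧ G.Adj y w)
  symm := by
    constructor
    intro x y ⟨hne, hx⟩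
    refine ⟨hne.symm, ?_⟩
    have h1 := G.adj_comm x y
    unfold Xor' Xor at hx ⊢
    tauto
  loopless := by constructor; intro x ⟨h, _⟩; exact h rfl

/-- `x ∼_G y` : `x = y` or `{x,y}` is an edge of `G`. -/
def SimpleGraph.nbr (G : SimpleGraph V) (x y : V) : Prop := x = y ∨ G.Adj x y

theorem SimpleGraph.nbr_comm (G : SimpleGraph V) (x y : V) : G.nbr x y ↔ G.nbr y x :=
  or_congr eq_comm (G.adj_comm x y)

private theorem xor_swap_right (a b c : Prop) : Xor' (Xor' a b) c ↔ Xor' (Xor' a c) b := by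
  unfold Xor' Xor; tauto

/-- The pivot `G[uv]` of `G` on an edge `{u,v}`, characterized by
`x ∼_{G[uv]} y ⟺ (x ∼_G y) XOR ((x ∼_G u) ∧ (y ∼_G v)) XOR ((x ∼_G v) ∧ (y ∼_G u))`. -/
def SimpleGraph.pivot (G : SimpleGraph V) (u v : V) : SimpleGraph V where
  Adj x y := x ≠ y ∧
    Xor' (Xor' (G.nbr x y) (G.nbr x u ∧ G.nbr y v)) (G.nbr x v ∧ G.nbr y u)
  symm := by
    constructor
    intro x y ⟨hne, hx⟩
    refine ⟨hne.symm, ?_⟩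
    show Xor' (Xor' (G.nbr y x) (G.nbr y u ∧ G.nbr x v)) (G.nbr y v ∧ G.nbr x u)
    rw [G.nbr_comm y x, and_comm (a := G.nbr y u) (b := G.nbr x v),
      and_comm (a := G.nbr y v) (b := G.nbr x u)]
    exact (xor_swap_right _ _ _).mp hx
  loopless := by constructor; intro x ⟨h, _⟩; exact h rfl

/-- Determinant over GF(2) of the adjacency matrix of the subgraph of `G` induced by `S`. -/
noncomputable def gdet (G : SimpleGraph V) (S : Finset V) : ZMod 2 := by
  classical
  exact Matrix.det (Matrix.of fun i j : S => if G.Adj i j then (1 : ZMod 2) else 0)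

/-- Apply a sequence of pivots (left to right). -/
def applyPivots (G : SimpleGraph V) : List (V × V) → SimpleGraph V
  | [] => G
  | p :: φ => applyPivots (G.pivot p.1 p.2) φ

/-- A sequence of pivots is applicable when each pair is an edge of the graph
obtained by applying all preceding pivots. -/
def PivotsApplicable (G : SimpleGraph V) : List (V × V) → Prop
  | [] => True
  | p :: φ => G.Adj p.1 p.2 ∧ PivotsApplicable (G.pivot p.1 p.2) φ

/-- The support of a sequence of pivots: vertices occurring an odd number of times. -/
def pivotSupport (φ : List (V × V)) : Finset V :=
  Finset.univ.filter fun x => Odd ((φ.flatMap fun p => [p.1, p.2]).count x)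

/-- A sequence of pivots is reduced if its pivot vertices are pairwise distinct. -/
def ReducedSeq (φ : List (V × V)) : Prop := (φ.flatMap fun p => [p.1, p.2]).Nodup

/-- The number of perfect matchings of the subgraph of `G` induced by `S`:
sets of edges of `G` inside `S` such that every vertex of `S` lies in exactly one of them. -/
noncomputable def pmCount (G : SimpleGraph V) (S : Finset V) : ℕ := by
  classical
  exact (Finset.univ.filter fun P : Finset (Sym2 V) =>
    (∀ e ∈ P, e ∈ G.edgeSet ∧ ∀ v ∈ e, v ∈ S) ∧
    ∀ v ∈ S, ∃! e, e ∈ P ∧ v ∈ e).card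

private theorem pivot_twins_mp (G : SimpleGraph V) (u w v v' : V)
    (h : ∀ x : V, G.nbr v x ↔ G.nbr v' x) (x : V)
    (hn : (G.pivot u w).nbr v x) : (G.pivot u w).nbr v' x := by
  by_cases hvv : v = v'
  · subst hvv; exact hn
  have hu := h u
  have hw := h w
  have hx := h x
  rcases hn with rfl | ⟨hne, hxor⟩
  · by_cases hvv' : v' = v
    · exact Or.inl hvv'
    · refine Or.inr ⟨hvv', ?_⟩
      have T : G.nbr v' v := (h v).mp (Or.inl rfl)
      unfold Xor' Xor
      tauto
  · by_cases hxv' : x = v'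
    · exact Or.inl hxv'.symm
    · refine Or.inr ⟨fun he => hxv' he.symm, ?_⟩
      simp only [← hx, ← hu, ← hw]
      exact hxor

private theorem pivot_twins_step (G : SimpleGraph V) (u w v v' : V)
    (h : ∀ x : V, G.nbr v x ↔ G.nbr v' x) (x : V) :
    (G.pivot u w).nbr v x ↔ (G.pivot u w).nbr v' x :=
  ⟨pivot_twins_mp G u w v v' h x,
   pivot_twins_mp G u w v' v (fun y => (h y).symm) x⟩

/-- twins stay twins under any applicable sequence of pivots. -/
theorem pivot_twins (G : SimpleGraph V) (v v' : V)
    (h : ∀ x : V, G.nbr v x ↔ G.nbr v' x)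
    (φ : List (V × V)) (hφ : PivotsApplicable G φ) (x : V) :
    ((applyPivots G φ).nbr v x ↔ (applyPivots G φ).nbr v' x) := by
  induction φ generalizing G with
  | nil => exact h x
  | cons p φ ih =>
    exact ih (G.pivot p.1 p.2) (pivot_twins_step G p.1 p.2 v v' h) hφ.2
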